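/- arXiv:2509.11357 — 2 statements merged into one kernel-verified Lean document; each statement's English description precedes it below -/
import Mathlib

section
/- Strengthened CCV bound: under the first-violation elimination rule, the positive-part cumulative constraint violation max_j sum_{t=1}^T max(0, c_j(a_t, y_t)) is at most |A| − |A^c_{1:T}|, where A^c_{1:T} is the set of actions that satisfy all constraints in every round. -/
open Classical in
/-- Strengthened CCV bound: positive-part CCV is at most |A| - |A^c_{1:T}|. -/
theorem stmt2 {A Y : Type*} [Fintype A] {J T : ℕ}
    (c : Fin J → A → Y → ℝ)
    (hc : ∀ j a y, c j a y ∈ Set.Icc (-1 : ℝ) 1)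
    (y : ℕ → Y) (a : ℕ → A)
    (Ahat : ℕ → Set A)
    (h0 : Ahat 0 = Set.univ)
    (hstep : ∀ t b, b ∈ Ahat (t + 1) ↔ b ∈ Ahat t ∧ ∀ j, c j b (y t) ≤ 0)
    (hplay : ∀ t < T, a t ∈ Ahat t) :
    ∀ j, ∑ t ∈ Finset.range T, max 0 (c j (a t) (y t)) ≤
      (Fintype.card A : ℝ) -
        ((Finset.univ.filter
            (fun b : A => ∀ t ∈ Finset.range T, ∀ j, c j b (y t) ≤ 0)).card : ℝ) := by
  intro j
  classical
  set Ac : Finset A := Finset.univ.filter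
      (fun b : A => ∀ t ∈ Finset.range T, ∀ j, c j b (y t) ≤ 0) with hAc
  set bad : Finset ℕ := (Finset.range T).filter
      (fun t => ∃ j, 0 < c j (a t) (y t)) with hbad
  -- Ahat is antitone
  have hanti : ∀ s t : ℕ, s ≤ t → Ahat t ⊆ Ahat s := by
    intro s t hst
    induction t with
    | zero => simp_all
    | succ n ih =>
      rcases Nat.lt_or_ge s (n+1) with h | h
      · intro x hx
        exact ih (Nat.lt_succ_iff.mp h) ((hstep n x).mp hx).1
      · have : s = n + 1 := le_antisymm hst h
        subst this; exact fun x hx => hx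
  -- injective on bad
  have hkey : ∀ s t : ℕ, s ∈ bad → t ∈ bad → s < t → a s ≠ a t := by
    intro s t hs ht h hst
    simp only [hbad, Finset.mem_filter, Finset.mem_range] at hs ht
    obtain ⟨j', hj'⟩ := hs.2
    have hnot : a s ∉ Ahat (s + 1) := by
      intro hmem
      exact absurd (((hstep s (a s)).mp hmem).2 j') (not_le.mpr hj')
    have : a t ∈ Ahat (s + 1) := hanti (s+1) t h (hplay t ht.1)
    rw [← hst] at this
    exact hnot this
  have hinj : Set.InjOn a bad := by
    intro s hs t ht hst
    rcases lt_trichotomy s t with h | h | h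
    · exact absurd hst (hkey s t (Finset.mem_coe.mp hs) (Finset.mem_coe.mp ht) h)
    · exact h
    · exact absurd hst.symm (hkey t s (Finset.mem_coe.mp ht) (Finset.mem_coe.mp hs) h)
  -- image of bad is disjoint from Ac
  have himg : bad.image a ⊆ Finset.univ \ Ac := by
    intro b hb
    simp only [Finset.mem_image] at hb
    obtain ⟨t, ht, rfl⟩ := hb
    simp only [hbad, Finset.mem_filter, Finset.mem_range] at ht
    obtain ⟨j', hj'⟩ := ht.2
    simp only [Finset.mem_sdiff, Finset.mem_univ, true_and, hAc, Finset.mem_filter,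
      Finset.mem_range, not_and, not_forall]
    exact ⟨t, ht.1, j', not_le.mpr hj'⟩
  have hcard : bad.card ≤ Fintype.card A - Ac.card := by
    have h1 : (bad.image a).card = bad.card := Finset.card_image_of_injOn hinj
    have h2 := Finset.card_le_card himg
    rw [h1, Finset.card_sdiff_of_subset (Finset.subset_univ Ac), Finset.card_univ] at h2
    exact h2
  -- bound the sum
  have hsum : ∑ t ∈ Finset.range T, max 0 (c j (a t) (y t)) ≤
      ∑ t ∈ Finset.range T, (if t ∈ bad then (1:ℝ) else 0) := by
    apply Finset.sum_le_sum
    intro t ht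
    by_cases hpos : 0 < c j (a t) (y t)
    · have : t ∈ bad := by
        simp only [hbad, Finset.mem_filter]; exact ⟨ht, j, hpos⟩
      rw [if_pos this]
      exact max_le zero_le_one (hc j (a t) (y t)).2
    · have : max 0 (c j (a t) (y t)) = 0 := max_eq_left (not_lt.mp hpos)
      rw [this]
      split <;> norm_num
  have hsum2 : ∑ t ∈ Finset.range T, (if t ∈ bad then (1:ℝ) else 0) = bad.card := by
    rw [Finset.sum_ite_mem, Finset.inter_eq_right.mpr (Finset.filter_subset _ _)]
    simp
    rfl
  have hAcle : Ac.card ≤ Fintype.card A := by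
    simpa using Finset.card_le_card (Finset.subset_univ Ac)
  calc ∑ t ∈ Finset.range T, max 0 (c j (a t) (y t))
      ≤ (bad.card : ℝ) := by rw [← hsum2]; exact hsum
    _ ≤ ((Fintype.card A - Ac.card : ℕ) : ℝ) := by exact_mod_cast hcard
    _ = (Fintype.card A : ℝ) - Ac.card := by
        rw [Nat.cast_sub hAcle]
end

section
/- In the multi-subsequence elimination algorithm (parallel copies of the first-violation elimination rule, one per subsequence, with the agent playing from the union of active candidate sets), the cumulative constraint violation over any subsequence S ∈ S is at most |A|·|S_col|, where |S_col| is the number of subsequences. -/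
/-- Multi-subsequence first-violation elimination: CCV over any subsequence is at most
|A|·|S_col|. -/
theorem stmt11 {A Y : Type*} [Fintype A] [DecidableEq A] {J T : ℕ}
    (c : Fin J → A → Y → ℝ)
    (hc : ∀ j a y, c j a y ∈ Set.Icc (-1 : ℝ) 1)
    (y : ℕ → Y) (a : ℕ → A)
    (Scol : Finset (Finset ℕ))
    (hcover : ∀ t < T, ∃ S ∈ Scol, t ∈ S)
    (Ahat : ℕ → Finset ℕ → Set A)
    (h0 : ∀ S ∈ Scol, Ahat 0 S = Set.univ)
    (hstep : ∀ S ∈ Scol, ∀ t b, b ∈ Ahat (t + 1) S ↔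
      (b ∈ Ahat t S ∧ ¬(t ∈ S ∧ b = a t ∧ ∃ j, 0 < c j b (y t))))
    (hplay : ∀ t < T, ∃ S ∈ Scol, t ∈ S ∧ a t ∈ Ahat t S) :
    ∀ S ∈ Scol, ∀ j,
      ∑ t ∈ (Finset.range T).filter (fun t => t ∈ S), c j (a t) (y t) ≤
        (Fintype.card A : ℝ) * Scol.card := by
  classical
  intro S hS j
  set P : ℕ → Prop := fun t => ∃ j', 0 < c j' (a t) (y t) with hP
  set f : ℕ → Finset ℕ → ℕ := fun t S' => (Set.toFinite (Ahat t S')).toFinset.card with hf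
  set Φ : ℕ → ℕ := fun t => ∑ S' ∈ Scol, f t S' with hΦ
  have hsub : ∀ S' ∈ Scol, ∀ t, Ahat (t + 1) S' ⊆ Ahat t S' := by
    intro S' hS' t b hb
    exact ((hstep S' hS' t b).1 hb).1
  have hfm : ∀ S' ∈ Scol, ∀ t, f (t + 1) S' ≤ f t S' := by
    intro S' hS' t
    apply Finset.card_le_card
    intro b hb
    simp only [Set.Finite.mem_toFinset] at *
    exact hsub S' hS' t hb
  have hmono : ∀ t, Φ (t + 1) ≤ Φ t := by
    intro t
    exact Finset.sum_le_sum fun S' hS' => hfm S' hS' t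
  have hdrop : ∀ t, t < T → P t → Φ (t + 1) + 1 ≤ Φ t := by
    intro t ht hPt
    obtain ⟨S', hS', htS', haS'⟩ := hplay t ht
    have hrm : a t ∉ Ahat (t + 1) S' := by
      intro hcontra
      exact ((hstep S' hS' t (a t)).1 hcontra).2 ⟨htS', rfl, hPt⟩
    have h1 : f (t + 1) S' + 1 ≤ f t S' := by
      have hss : (Set.toFinite (Ahat (t + 1) S')).toFinset ⊂
          (Set.toFinite (Ahat t S')).toFinset := by
        constructor
        · intro b hb; simp only [Set.Finite.mem_toFinset] at *; exact hsub S' hS' t hb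
        · intro hcon
          have := hcon (by simpa [Set.Finite.mem_toFinset] using haS')
          rw [Set.Finite.mem_toFinset] at this
          exact hrm this
      exact Nat.succ_le_of_lt (Finset.card_lt_card hss)
    have e1 : ∀ n, Φ n = ∑ S'' ∈ Scol.erase S', f n S'' + f n S' := by
      intro n
      rw [hΦ]
      exact (Finset.sum_erase_add Scol _ hS').symm
    rw [e1 (t + 1), e1 t]
    have h2 : ∑ S'' ∈ Scol.erase S', f (t + 1) S'' ≤ ∑ S'' ∈ Scol.erase S', f t S'' :=
      Finset.sum_le_sum fun S'' hS'' => hfm S'' (Finset.mem_of_mem_erase hS'') t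
    omega
  have key : ∀ n, n ≤ T → Φ n + ((Finset.range n).filter P).card ≤ Φ 0 := by
    intro n
    induction n with
    | zero => simp
    | succ n ih =>
      intro hn
      have hn' : n ≤ T := Nat.le_of_succ_le hn
      have ihn := ih hn'
      rw [Finset.range_add_one, Finset.filter_insert]
      by_cases hPn : P n
      · rw [if_pos hPn, Finset.card_insert_of_notMem (by simp)]
        have := hdrop n hn hPn
        omega
      · rw [if_neg hPn]
        have := hmono n
        omega
  have hΦ0 : Φ 0 = Fintype.card A * Scol.card := by
    have hf0 : ∀ S' ∈ Scol, f 0 S' = Fintype.card A := by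
      intro S' hS'
      rw [hf]
      simp [h0 S' hS']
    calc Φ 0 = ∑ _S' ∈ Scol, Fintype.card A := Finset.sum_congr rfl hf0
      _ = Fintype.card A * Scol.card := by
          rw [Finset.sum_const, smul_eq_mul, Nat.mul_comm]
  have hVcard : ((Finset.range T).filter P).card ≤ Fintype.card A * Scol.card := by
    have := key T le_rfl
    omega
  calc ∑ t ∈ (Finset.range T).filter (fun t => t ∈ S), c j (a t) (y t)
      ≤ ∑ t ∈ (Finset.range T).filter (fun t => t ∈ S), (if P t then (1 : ℝ) else 0) := by
        apply Finset.sum_le_sum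
        intro t _
        by_cases hPt : P t
        · rw [if_pos hPt]; exact (hc j (a t) (y t)).2
        · rw [if_neg hPt]
          by_contra hlt
          exact hPt ⟨j, lt_of_not_ge hlt⟩
    _ = ((((Finset.range T).filter (fun t => t ∈ S)).filter P).card : ℝ) := by
        rw [Finset.sum_boole]
    _ ≤ (((Finset.range T).filter P).card : ℝ) := by
        have hsub2 : ((Finset.range T).filter (fun t => t ∈ S)).filter P ⊆
            (Finset.range T).filter P := by
          intro t ht
          simp only [Finset.mem_filter] at *
          tauto
        exact_mod_cast Finset.card_le_card hsub2
    _ ≤ (Fintype.card A : ℝ) * Scol.card := by exact_mod_cast hVcard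
end
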